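/- Let U ⊆ ℂ be open, let a, b, c, d ∈ ℂ with a·d − b·c = 1, set γ(z) = (a·z+b)/(c·z+d), and assume γ(z) ∈ U for all z ∈ U with c·z+d ≠ 0. Let k ∈ ℤ and let α : ℂ → ℂ be analytic on U with α(γ(z)) = (c·z+d)^k · α(z) for all z ∈ U with c·z+d ≠ 0. Define φ_α(w) = w + k·α(w)/α'(w). Then for every z ∈ U such that c·z+d ≠ 0, α'(z) ≠ 0, α'(γ(z)) ≠ 0, and c·φ_α(z) + d ≠ 0, one has φ_α(γ(z)) = (a·φ_α(z) + b)/(c·φ_α(z) + d). -/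

import Mathlib

private lemma phi_key_algebra (a c A C E α0 α1 K : ℂ)
    (h1 : a * C - A * c = 1) (hC : C ≠ 0)
    (hα1 : α1 ≠ 0) (hE : E ≠ 0) (hS : c * K * α0 + C * α1 ≠ 0) :
    A / C + K * (E * C * α0) / (C ^ 2 * (K * E * c * α0 + E * C * α1))
      = (A + a * (K * α0 / α1)) / (C + c * (K * α0 / α1)) := by
  have hden2 : C + c * (K * α0 / α1) ≠ 0 := by
    intro h; apply hS; field_simp at h; linear_combination h
  have hS2 : C * α1 + K * c * α0 ≠ 0 := by intro h; exact hS (by linear_combination h)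
  have hden3 : K * E * c * α0 + E * C * α1 ≠ 0 := by
    intro h; exact mul_ne_zero hE hS2 (by linear_combination h)
  have hden4 : C ^ 2 * (K * E * c * α0 + E * C * α1) ≠ 0 :=
    mul_ne_zero (pow_ne_zero 2 hC) hden3
  rw [div_add_div _ _ hC hden4, div_eq_div_iff (mul_ne_zero hC hden4) hden2]
  field_simp
  ring_nf
  linear_combination (-(K * α0 * (C * α1 + K * c * α0))) * h1

/-- Equivariance of the paper's weight-`k` φ-operator `φ_α(z) = z + k·α/α'`,
mapping automorphic forms of weight `k` to equivariant functions. -/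
theorem phi_operator_equivariance
    (U : Set ℂ) (hU : IsOpen U)
    (a b c d : ℂ) (hdet : a * d - b * c = 1)
    (γ : ℂ → ℂ) (hγ : γ = fun z => (a * z + b) / (c * z + d))
    (hmaps : ∀ z ∈ U, c * z + d ≠ 0 → γ z ∈ U)
    (k : ℤ) (α : ℂ → ℂ) (hα : AnalyticOnNhd ℂ α U)
    (hauto : ∀ z ∈ U, c * z + d ≠ 0 → α (γ z) = (c * z + d) ^ k * α z)
    (φ : ℂ → ℂ) (hφ : φ = fun w => w + (k : ℂ) * α w / deriv α w) :
    ∀ z ∈ U, c * z + d ≠ 0 → deriv α z ≠ 0 → deriv α (γ z) ≠ 0 →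
      c * φ z + d ≠ 0 →
      φ (γ z) = (a * φ z + b) / (c * φ z + d) := by
  subst hγ hφ
  intro z hz hC hα1 hαγ hφd
  simp only at hφd ⊢
  set C : ℂ := c * z + d with hCdef
  set G : ℂ := (a * z + b) / C with hGdef
  have hGU : G ∈ U := hmaps z hz hC
  -- derivative of the Möbius map
  have hA : HasDerivAt (fun w => a * w + b) a z := by
    simpa using ((hasDerivAt_id z).const_mul a).add_const b
  have hCd : HasDerivAt (fun w => c * w + d) c z := by
    simpa using ((hasDerivAt_id z).const_mul c).add_const d
  have hγ' : HasDerivAt (fun w => (a * w + b) / (c * w + d))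
      ((a * C - (a * z + b) * c) / C ^ 2) z := hA.div hCd hC
  have hone : a * C - (a * z + b) * c = 1 := by
    simp only [hCdef]; linear_combination hdet
  rw [hone] at hγ'
  have hαG : HasDerivAt α (deriv α G) G := (hα G hGU).differentiableAt.hasDerivAt
  have h1 : HasDerivAt (fun w => α ((a * w + b) / (c * w + d)))
      (deriv α G * (1 / C ^ 2)) z := hαG.comp z hγ'
  -- derivative of the automorphy factor side
  have hzp : HasDerivAt (fun w => (c * w + d) ^ k)
      ((k : ℂ) * C ^ (k - 1) * c) z := by
    exact (hasDerivAt_zpow k C (Or.inl hC)).comp z hCd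
  have hαz : HasDerivAt α (deriv α z) z := (hα z hz).differentiableAt.hasDerivAt
  have h2 : HasDerivAt (fun w => (c * w + d) ^ k * α w)
      ((k : ℂ) * C ^ (k - 1) * c * α z + C ^ k * deriv α z) z := hzp.mul hαz
  -- the two functions agree near z
  have hVopen : IsOpen (U ∩ {w | c * w + d ≠ 0}) :=
    hU.inter (isOpen_ne_fun (by fun_prop) continuous_const)
  have hev : (fun w => α ((a * w + b) / (c * w + d))) =ᶠ[nhds z]
      (fun w => (c * w + d) ^ k * α w) := by
    filter_upwards [hVopen.mem_nhds ⟨hz, hC⟩] with w hw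
    exact hauto w hw.1 hw.2
  have h1' : HasDerivAt (fun w => (c * w + d) ^ k * α w)
      (deriv α G * (1 / C ^ 2)) z := h1.congr_of_eventuallyEq hev.symm
  have hder : deriv α G * (1 / C ^ 2)
      = (k : ℂ) * C ^ (k - 1) * c * α z + C ^ k * deriv α z := h1'.unique h2
  have hE : C ^ (k - 1) ≠ 0 := zpow_ne_zero _ hC
  have hCk : C ^ k = C ^ (k - 1) * C := by
    rw [← zpow_add_one₀ hC]; ring_nf
  have hD : deriv α G = C ^ 2 * ((k : ℂ) * C ^ (k - 1) * c * α z + C ^ k * deriv α z) := by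
    field_simp at hder
    linear_combination hder
  have hαGval : α G = C ^ k * α z := hauto z hz hC
  have hden : c * (k : ℂ) * α z + C * deriv α z ≠ 0 := by
    intro h
    apply hφd
    have hrw : c * (z + (k : ℂ) * α z / deriv α z) + d
        = (c * (k : ℂ) * α z + C * deriv α z) / deriv α z := by
      rw [hCdef]; field_simp; ring
    rw [hrw, h, zero_div]
  rw [hαGval, hD, hCk]
  have hR1 : a * (z + (k : ℂ) * α z / deriv α z) + b
      = (a * z + b) + a * ((k : ℂ) * α z / deriv α z) := by ring
  have hR2 : c * (z + (k : ℂ) * α z / deriv α z) + d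
      = C + c * ((k : ℂ) * α z / deriv α z) := by rw [hCdef]; ring
  rw [hGdef, hR1, hR2]
  exact phi_key_algebra a c (a * z + b) C (C ^ (k - 1)) (α z) (deriv α z) (k : ℂ)
    hone hC hα1 hE hden
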